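/- Seasonal threshold: with β_γ(t) = β₀·(1 + γ·Ψ(ωt)), γ ≥ 0, β₀, σ+g, T > 0, S_c = (σ+g)/β₀, and ∫₀ᵀ 𝓢(t) dt = ln(1−p) + AT, the Floquet condition exp(∫₀ᵀ β_γ(t)·𝓢(t) dt − (σ+g)T) < 1 holds if and only if p > 1 − exp(−[(A − S_c)·T + γ·∫₀ᵀ Ψ(ωt)·𝓢(t) dt]). -/
import Mathlib


open Real MeasureTheory

theorem stmt_18 (A β₀ σ g T ω γ p : ℝ) (hA : 0 < A) (hβ : 0 < β₀) (hσ : 0 ≤ σ)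
    (hg : 0 ≤ g) (hσg : 0 < σ + g) (hT : 0 < T) (hω : 0 < ω) (hγ : 0 ≤ γ)
    (hp0 : 0 < p) (hp1 : p < 1) (hAc : A > (σ + g) / β₀)
    (Ψ 𝓢 : ℝ → ℝ) (hΨcont : Continuous Ψ) (hΨnonneg : ∀ t, 0 ≤ Ψ t)
    (h𝓢cont : Continuous 𝓢)
    (h𝓢int : ∫ t in (0:ℝ)..T, 𝓢 t = Real.log (1 - p) + A * T) :
    exp ((∫ t in (0:ℝ)..T, β₀ * (1 + γ * Ψ (ω * t)) * 𝓢 t) - (σ + g) * T) < 1 ↔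
      p > 1 - exp (-((A - (σ + g) / β₀) * T + γ * ∫ t in (0:ℝ)..T, Ψ (ω * t) * 𝓢 t)) := by
  set I : ℝ := ∫ t in (0:ℝ)..T, Ψ (ω * t) * 𝓢 t with hIdef
  have hi1 : IntervalIntegrable (fun t => β₀ * 𝓢 t) volume 0 T :=
    (continuous_const.mul h𝓢cont).intervalIntegrable 0 T
  have hi2 : IntervalIntegrable (fun t => β₀ * γ * (Ψ (ω * t) * 𝓢 t)) volume 0 T :=
    (continuous_const.mul ((hΨcont.comp (continuous_const.mul continuous_id)).mul
      h𝓢cont)).intervalIntegrable 0 T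
  have hI : (∫ t in (0:ℝ)..T, β₀ * (1 + γ * Ψ (ω * t)) * 𝓢 t)
      = β₀ * (Real.log (1 - p) + A * T) + β₀ * γ * I := by
    have h1 : ∀ t ∈ Set.uIcc (0:ℝ) T,
        β₀ * (1 + γ * Ψ (ω * t)) * 𝓢 t = β₀ * 𝓢 t + β₀ * γ * (Ψ (ω * t) * 𝓢 t) := by
      intro t _; ring
    rw [intervalIntegral.integral_congr h1, intervalIntegral.integral_add hi1 hi2,
      intervalIntegral.integral_const_mul, intervalIntegral.integral_const_mul, h𝓢int]
  rw [hI, Real.exp_lt_one_iff]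
  have hp : (0:ℝ) < 1 - p := by linarith
  have key : β₀ * (Real.log (1 - p) + A * T) + β₀ * γ * I - (σ + g) * T
      = β₀ * (Real.log (1 - p) + ((A - (σ + g) / β₀) * T + γ * I)) := by
    field_simp; ring
  rw [key]
  constructor
  · intro h
    have h2 : Real.log (1 - p) + ((A - (σ + g) / β₀) * T + γ * I) < 0 := by
      nlinarith
    have h3 : Real.log (1 - p) < -((A - (σ + g) / β₀) * T + γ * I) := by linarith
    rw [Real.log_lt_iff_lt_exp hp] at h3
    linarith
  · intro h
    have h3 : 1 - p < Real.exp (-((A - (σ + g) / β₀) * T + γ * I)) := by linarith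
    rw [← Real.log_lt_iff_lt_exp hp] at h3
    nlinarith
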